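/- Completeness Theorem: every first-order filter of F(L) is logically closed; consequently, for any set S of formulas, Con(S) = Ded(S), i.e. S ⊨ A iff S ⊢ A. -/

import Mathlib

/-- A first-order language: function and predicate symbols of each arity,
    with a distinguished 0-ary predicate symbol `ff` (falsum). -/
structure Lang where
  Func : ℕ → Type
  Pred : ℕ → Type
  ff : Pred 0

/-- Terms of `L` over a set `C` of parameters (variables are 0-indexed:
    `var i` is the variable `x_{i+1}` of the paper). -/
inductive Tm (L : Lang) (C : Type) : Type where
  | var : ℕ → Tm L C
  | param : C → Tm L C
  | func : {n : ℕ} → L.Func n → (Fin n → Tm L C) → Tm L C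

variable {L : Lang} {C : Type}

/-- Substitution `t[t₁, t₂, ...]` on terms. -/
def Tm.subst : Tm L C → (ℕ → Tm L C) → Tm L C
  | .var i, s => s i
  | .param c, _ => .param c
  | .func f ts, s => .func f (fun k => (ts k).subst s)

/-- `t⁺ = t[x₂, x₃, ...]`. -/
def Tm.shift (t : Tm L C) : Tm L C := t.subst fun i => .var (i + 1)

/-- The sequence `x₁, t₁⁺, t₂⁺, ...` used in the clause for `∀` in formula substitution. -/
def liftSeq (s : ℕ → Tm L C) : ℕ → Tm L C
  | 0 => .var 0
  | n + 1 => (s n).shift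

/-- Formulas of `L` over `C`: atomic formulas, implication and `∀`. -/
inductive Fml (L : Lang) (C : Type) : Type where
  | pred : {n : ℕ} → L.Pred n → (Fin n → Tm L C) → Fml L C
  | imp : Fml L C → Fml L C → Fml L C
  | all : Fml L C → Fml L C

/-- Substitution `A[t₁, t₂, ...]` on formulas:
    `(∀A)[t₁,t₂,...] = ∀(A[x₁, t₁⁺, t₂⁺, ...])`. -/
def Fml.subst : Fml L C → (ℕ → Tm L C) → Fml L C
  | .pred P ts, s => .pred P (fun k => (ts k).subst s)
  | .imp A B, s => .imp (A.subst s) (B.subst s)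
  | .all A, s => .all (A.subst (liftSeq s))

/-- The sequence `x₂, x₃, ...` (so `D⁺ = D.subst (plusSeq L C)`). -/
def plusSeq (L : Lang) (C : Type) : ℕ → Tm L C := fun i => .var (i + 1)

/-- The sequence `x₁, x₁, x₂, ...` (so `D⁻ = D.subst (minusSeq L C)`). -/
def minusSeq (L : Lang) (C : Type) : ℕ → Tm L C
  | 0 => .var 0
  | n + 1 => .var n

/-- The sequence substituting `t` for the variable `var i` and fixing all other variables,
    i.e. `D[t/x_{i+1}]` in the paper's (1-indexed) notation. -/
def singleSeq (i : ℕ) (t : Tm L C) : ℕ → Tm L C := fun j => if j = i then t else .var j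

/-- A term is independent of the variable `var i` if `t = t[x_{i+2}/x_{i+1}]`. -/
def Tm.Indep (i : ℕ) (t : Tm L C) : Prop := t.subst (singleSeq i (.var (i + 1))) = t

/-- A formula is independent of the variable `var i` if `A = A[x_{i+2}/x_{i+1}]`. -/
def Fml.Indep (i : ℕ) (A : Fml L C) : Prop := A.subst (singleSeq i (.var (i + 1))) = A

/-- The variable `var i` is free in `A` iff `A` is not independent of it. -/
def Fml.FreeIn (i : ℕ) (A : Fml L C) : Prop := ¬ A.Indep i

/-- `(∀x_{i+1})A := ∀(A[x₂, x₃, ..., x_i, x₁, x_{i+2}, ...])` (0-indexed `i`):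
    the substituted sequence sends `var i` to `var 0` and `var j` to `var (j+1)` otherwise. -/
def allQ (i : ℕ) (A : Fml L C) : Fml L C :=
  .all (A.subst fun j => if j = i then .var 0 else .var (j + 1))

/-- The sequence `t, x₁, x₂, ...`. -/
def instSeq (t : Tm L C) : ℕ → Tm L C
  | 0 => t
  | n + 1 => .var n

/-- The atomic formula `FF` (falsum). -/
def FF (L : Lang) (C : Type) : Fml L C := .pred L.ff (fun i => i.elim0)

/-- `¬A := A ⇒ FF`. -/
def Fml.neg (A : Fml L C) : Fml L C := A.imp (FF L C)

/-- A perfect (Henkin) valuation of `L` over `C`. -/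
def PerfectVal (U : Set (Fml L C)) : Prop :=
  FF L C ∉ U ∧
  (∀ A B : Fml L C, A.imp B ∈ U ↔ (A ∉ U ∨ B ∈ U)) ∧
  (∀ A : Fml L C, A.all ∈ U ↔ ∀ t : Tm L C, A.subst (instSeq t) ∈ U)

/-- The first-order axioms A1–A6 (language without equality), closed under prefixing `∀`. -/
inductive Ax : Fml L C → Prop where
  | a1 (A B : Fml L C) : Ax (A.imp (B.imp A))
  | a2 (A B D : Fml L C) : Ax ((A.imp (B.imp D)).imp ((A.imp B).imp (A.imp D)))
  | a3 (A : Fml L C) : Ax ((A.neg.neg).imp A)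
  | a4 (A B : Fml L C) : Ax (((A.imp B).all).imp ((Fml.all A).imp (Fml.all B)))
  | a5 (A : Fml L C) (t : Tm L C) : Ax ((Fml.all A).imp (A.subst (instSeq t)))
  | a6 (A : Fml L C) : Ax (A.imp (Fml.all (A.subst (plusSeq L C))))
  | gen (A : Fml L C) : Ax A → Ax A.all

/-- A first-order filter of `F(L) = F(L, ∅)`: contains all axioms, closed under modus ponens. -/
def IsFilter (I : Set (Fml L Empty)) : Prop :=
  (∀ A : Fml L Empty, Ax A → A ∈ I) ∧
  ∀ A B : Fml L Empty, A ∈ I → A.imp B ∈ I → B ∈ I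

/-- The inclusion `T(L) = T(L, ∅) ⊆ T(L, C)`. -/
def Tm.ofE : Tm L Empty → Tm L C
  | .var i => .var i
  | .param c => c.elim
  | .func f ts => .func f fun k => (ts k).ofE

/-- The inclusion `F(L) = F(L, ∅) ⊆ F(L, C)`. -/
def Fml.ofE : Fml L Empty → Fml L C
  | .pred P ts => .pred P fun k => (ts k).ofE
  | .imp A B => .imp A.ofE B.ofE
  | .all A => .all A.ofE

/-- A logical valuation of `L`: the trace on `F(L)` of `U_{(t₁,t₂,...)}` for a perfect
    valuation `U` over some set of parameters. -/
def LogicalValuation (V : Set (Fml L Empty)) : Prop :=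
  ∃ (C' : Type) (U : Set (Fml L C')) (t : ℕ → Tm L C'),
    PerfectVal U ∧ V = {A : Fml L Empty | (A.ofE : Fml L C').subst t ∈ U}

/-- A subset of `F(L)` is logically closed if it is an intersection of logical valuations. -/
def LogicallyClosed (S : Set (Fml L Empty)) : Prop :=
  ∃ 𝒱 : Set (Set (Fml L Empty)), (∀ V ∈ 𝒱, LogicalValuation V) ∧ S = ⋂₀ 𝒱

/-- A formula has rank `n` iff it is independent of every variable beyond the first `n`,
    i.e. `A = A[x₁, ..., x_{n-1}, x_n, x_n, ...]`. A sentence is a formula of rank 0. -/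
def Fml.hasRank (n : ℕ) (A : Fml L C) : Prop := ∀ i, n ≤ i → A.Indep i

/-- `∀⁰A = A`, `∀ⁿA = ∀(∀ⁿ⁻¹A)`. -/
def forallIter : ℕ → Fml L C → Fml L C
  | 0, A => A
  | n + 1, A => (forallIter n A).all

section Compl

variable {L : Lang} {C C' C'' : Type}

/-- Simultaneous substitution of variables and parameters, terms. -/
def msubT : Tm L C → (ℕ → Tm L C') → (C → Tm L C') → Tm L C'
  | .var i, σ, _ => σ i
  | .param c, _, π => π c
  | .func f ts, σ, π => .func f (fun k => msubT (ts k) σ π)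

/-- Simultaneous substitution of variables and parameters, formulas. -/
def msubF : Fml L C → (ℕ → Tm L C') → (C → Tm L C') → Fml L C'
  | .pred P ts, σ, π => .pred P (fun k => msubT (ts k) σ π)
  | .imp A B, σ, π => .imp (msubF A σ π) (msubF B σ π)
  | .all A, σ, π => .all (msubF A (liftSeq σ) (fun c => (π c).shift))

theorem msubT_msubT (t : Tm L C) (σ₁ : ℕ → Tm L C') (π₁ : C → Tm L C')
    (σ₂ : ℕ → Tm L C'') (π₂ : C' → Tm L C'') :
    msubT (msubT t σ₁ π₁) σ₂ π₂
      = msubT t (fun i => msubT (σ₁ i) σ₂ π₂) (fun c => msubT (π₁ c) σ₂ π₂) := by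
  induction t with
  | var i => rfl
  | param c => rfl
  | func f ts ih => simp only [msubT]; exact congrArg _ (funext fun k => ih k)

theorem msubT_congr {t : Tm L C} {σ σ' : ℕ → Tm L C'} {π π' : C → Tm L C'}
    (hσ : ∀ i, σ i = σ' i) (hπ : ∀ c, π c = π' c) : msubT t σ π = msubT t σ' π' := by
  rw [funext hσ, funext hπ]

theorem subst_eq_msubT (t : Tm L C) (s : ℕ → Tm L C) : t.subst s = msubT t s Tm.param := by
  induction t with
  | var i => rfl
  | param c => rfl
  | func f ts ih => simp only [Tm.subst, msubT]; exact congrArg _ (funext fun k => ih k)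

theorem shift_eq_msubT (t : Tm L C) : t.shift = msubT t (fun i => .var (i+1)) Tm.param :=
  subst_eq_msubT ..

theorem subst_eq_msubF (A : Fml L C) (s : ℕ → Tm L C) : A.subst s = msubF A s Tm.param := by
  induction A generalizing s with
  | pred P ts => simp only [Fml.subst, msubF]; exact congrArg _ (funext fun k => subst_eq_msubT ..)
  | imp A B ihA ihB => simp only [Fml.subst, msubF, ihA, ihB]
  | all A ih =>
      simp only [Fml.subst, msubF, ih]
      have hπ : (fun c => ((Tm.param c : Tm L C)).shift) = (fun c => (Tm.param c : Tm L C)) :=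
        funext fun c => rfl
      rw [hπ]

theorem liftSeq_var : liftSeq (Tm.var : ℕ → Tm L C) = Tm.var := by
  funext i; cases i with
  | zero => rfl
  | succ n => simp only [liftSeq, Tm.shift, Tm.subst]

theorem ofE_eq_msubT (t : Tm L Empty) : (t.ofE : Tm L C) = msubT t Tm.var (fun c => c.elim) := by
  induction t with
  | var i => rfl
  | param c => exact c.elim
  | func f ts ih => simp only [Tm.ofE, msubT]; exact congrArg _ (funext fun k => ih k)

theorem ofE_eq_msubF (A : Fml L Empty) : (A.ofE : Fml L C) = msubF A Tm.var (fun c => c.elim) := by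
  induction A with
  | pred P ts => simp only [Fml.ofE, msubF]; exact congrArg _ (funext fun k => ofE_eq_msubT ..)
  | imp A B ihA ihB => simp only [Fml.ofE, msubF, ihA, ihB]
  | all A ih =>
      simp only [Fml.ofE, msubF, ih, liftSeq_var]
      exact congrArg Fml.all (congrArg (msubF A Tm.var) (funext fun c => c.elim))

theorem msubT_id (t : Tm L C) : msubT t Tm.var Tm.param = t := by
  induction t with
  | var i => rfl
  | param c => rfl
  | func f ts ih => simp only [msubT]; exact congrArg _ (funext fun k => ih k)

theorem msubF_id (A : Fml L C) : msubF A Tm.var Tm.param = A := by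
  induction A with
  | pred P ts => simp only [msubF]; exact congrArg _ (funext fun k => msubT_id ..)
  | imp A B ihA ihB => simp only [msubF, ihA, ihB]
  | all A ih =>
      simp only [msubF, liftSeq_var]
      rw [show (fun c => (Tm.param c : Tm L C).shift) = Tm.param from funext fun c => rfl]
      rw [ih]

theorem subst_id (A : Fml L C) : A.subst Tm.var = A := by
  rw [subst_eq_msubF, msubF_id]

/-- The key composition lemma for formulas. -/
theorem msubF_msubF (A : Fml L C) (σ₁ : ℕ → Tm L C') (π₁ : C → Tm L C')
    (σ₂ : ℕ → Tm L C'') (π₂ : C' → Tm L C'') :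
    msubF (msubF A σ₁ π₁) σ₂ π₂
      = msubF A (fun i => msubT (σ₁ i) σ₂ π₂) (fun c => msubT (π₁ c) σ₂ π₂) := by
  induction A generalizing σ₁ π₁ σ₂ π₂ with
  | pred P ts => simp only [msubF]; exact congrArg _ (funext fun k => msubT_msubT ..)
  | imp A B ihA ihB => simp only [msubF, ihA, ihB]
  | all A ih =>
      simp only [msubF, ih]
      have hσ : (fun i => msubT (liftSeq σ₁ i) (liftSeq σ₂) (fun c => (π₂ c).shift))
          = liftSeq (fun i => msubT (σ₁ i) σ₂ π₂) := by
        funext i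
        cases i with
        | zero => rfl
        | succ n =>
            show msubT ((σ₁ n).shift) (liftSeq σ₂) (fun c => (π₂ c).shift)
              = (msubT (σ₁ n) σ₂ π₂).shift
            rw [shift_eq_msubT, msubT_msubT, shift_eq_msubT (msubT (σ₁ n) σ₂ π₂), msubT_msubT]
            exact msubT_congr (fun i => shift_eq_msubT _) (fun c => shift_eq_msubT _)
      have hπ : (fun c => msubT (π₁ c).shift (liftSeq σ₂) (fun c => (π₂ c).shift))
          = fun c => (msubT (π₁ c) σ₂ π₂).shift := by
        funext c
        rw [shift_eq_msubT, msubT_msubT, shift_eq_msubT (msubT (π₁ c) σ₂ π₂), msubT_msubT]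
        exact msubT_congr (fun i => shift_eq_msubT _) (fun c => shift_eq_msubT _)
      rw [hσ, hπ]

end Compl

theorem msubF_congr {A : Fml L C} {σ σ' : ℕ → Tm L C'} {π π' : C → Tm L C'}
    (hσ : ∀ i, σ i = σ' i) (hπ : ∀ c, π c = π' c) : msubF A σ π = msubF A σ' π' := by
  rw [funext hσ, funext hπ]

theorem shift_inst_cancel (u : Tm L C') (t' : Tm L C') :
    msubT (u.shift) (instSeq t') Tm.param = u := by
  rw [shift_eq_msubT, msubT_msubT]
  exact (msubT_congr (fun i => rfl) (fun c => rfl)).trans (msubT_id u)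

theorem subst_subst (A : Fml L C) (s₁ s₂ : ℕ → Tm L C) :
    (A.subst s₁).subst s₂ = A.subst (fun i => (s₁ i).subst s₂) := by
  rw [subst_eq_msubF, subst_eq_msubF, msubF_msubF, subst_eq_msubF]
  exact msubF_congr (fun i => (subst_eq_msubT ..).symm) (fun c => rfl)

theorem msubF_FF (σ : ℕ → Tm L C') (π : C → Tm L C') : msubF (FF L C) σ π = FF L C' := by
  simp only [FF, msubF]
  exact congrArg _ (funext fun k => k.elim0)

theorem msubF_neg (A : Fml L C) (σ : ℕ → Tm L C') (π : C → Tm L C') :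
    msubF A.neg σ π = (msubF A σ π).neg := by
  simp only [Fml.neg, msubF]
  rw [msubF_FF]

theorem msubF_inst (A : Fml L C) (t : Tm L C) (σ : ℕ → Tm L C') (π : C → Tm L C') :
    msubF (A.subst (instSeq t)) σ π
      = (msubF A (liftSeq σ) (fun c => (π c).shift)).subst (instSeq (msubT t σ π)) := by
  rw [subst_eq_msubF, msubF_msubF, subst_eq_msubF, msubF_msubF]
  refine msubF_congr (fun i => ?_) (fun c => (shift_inst_cancel ..).symm)
  cases i with
  | zero => rfl
  | succ n =>
      show σ n = msubT ((σ n).shift) (instSeq (msubT t σ π)) Tm.param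
      exact (shift_inst_cancel ..).symm

theorem msubF_plus (A : Fml L C) (σ : ℕ → Tm L C') (π : C → Tm L C') :
    msubF (A.subst (plusSeq L C)) (liftSeq σ) (fun c => (π c).shift)
      = (msubF A σ π).subst (plusSeq L C') := by
  rw [subst_eq_msubF, msubF_msubF, subst_eq_msubF, msubF_msubF]
  refine msubF_congr (fun i => ?_) (fun c => ?_)
  · exact subst_eq_msubT (σ i) (plusSeq L C')
  · exact subst_eq_msubT (π c) (plusSeq L C')

/-- Axioms are stable under simultaneous substitution. -/
theorem Ax.msub {A : Fml L C} (h : Ax A) :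
    ∀ (σ : ℕ → Tm L C') (π : C → Tm L C'), Ax (msubF A σ π) := by
  induction h with
  | a1 A B => exact fun σ π => Ax.a1 _ _
  | a2 A B D => exact fun σ π => Ax.a2 _ _ _
  | a3 A =>
      intro σ π
      show Ax ((msubF A.neg.neg σ π).imp (msubF A σ π))
      rw [msubF_neg, msubF_neg]
      exact Ax.a3 _
  | a4 A B => intro σ π; exact Ax.a4 _ _
  | a5 A t => intro σ π; simp only [msubF, msubF_inst]; exact Ax.a5 _ _
  | a6 A => intro σ π; simp only [msubF, msubF_plus]; exact Ax.a6 _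
  | gen A h ih => intro σ π; exact Ax.gen _ (ih _ _)

/-- Axioms are stable under substitution. -/
theorem Ax.subst {A : Fml L C} (h : Ax A) (s : ℕ → Tm L C) : Ax (A.subst s) := by
  rw [subst_eq_msubF]; exact h.msub s Tm.param

/-- Provability from a set of hypotheses. -/
inductive Prov (S : Set (Fml L C)) : Fml L C → Prop where
  | ax {A} : Ax A → Prov S A
  | hyp {A} : A ∈ S → Prov S A
  | mp {A B} : Prov S A → Prov S (A.imp B) → Prov S B

theorem Prov.weaken {S T : Set (Fml L C)} {A : Fml L C} (h : Prov S A) (hST : S ⊆ T) :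
    Prov T A := by
  induction h with
  | ax h => exact .ax h
  | hyp h => exact .hyp (hST h)
  | mp _ _ ih1 ih2 => exact .mp ih1 ih2

/-- Transport of provability along simultaneous substitution. -/
theorem Prov.msub {S : Set (Fml L C)} {A : Fml L C} (h : Prov S A)
    (σ : ℕ → Tm L C') (π : C → Tm L C') :
    Prov ((fun B => msubF B σ π) '' S) (msubF A σ π) := by
  induction h with
  | ax h => exact .ax (h.msub σ π)
  | @hyp A h => exact .hyp ⟨A, h, rfl⟩
  | mp _ _ ih1 ih2 => exact .mp ih1 ih2

theorem Prov.finite {S : Set (Fml L C)} {A : Fml L C} (h : Prov S A) :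
    ∃ T ⊆ S, T.Finite ∧ Prov T A := by
  induction h with
  | ax h => exact ⟨∅, Set.empty_subset _, Set.finite_empty, .ax h⟩
  | @hyp A h => exact ⟨{A}, Set.singleton_subset_iff.2 h, Set.finite_singleton _, .hyp rfl⟩
  | mp _ _ ih1 ih2 =>
      obtain ⟨T1, hT1, hf1, hp1⟩ := ih1
      obtain ⟨T2, hT2, hf2, hp2⟩ := ih2
      exact ⟨T1 ∪ T2, Set.union_subset hT1 hT2, hf1.union hf2,
        .mp (hp1.weaken Set.subset_union_left) (hp2.weaken Set.subset_union_right)⟩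

theorem Prov.imp_self (S : Set (Fml L C)) (A : Fml L C) : Prov S (A.imp A) :=
  .mp (.ax (Ax.a1 A A)) (.mp (.ax (Ax.a1 A (A.imp A))) (.ax (Ax.a2 A (A.imp A) A)))

/-- Deduction theorem. -/
theorem Prov.deduction {S : Set (Fml L C)} {A B : Fml L C} (h : Prov (insert A S) B) :
    Prov S (A.imp B) := by
  induction h with
  | @ax B h => exact .mp (.ax h) (.ax (Ax.a1 B A))
  | @hyp B h =>
      rcases h with h | h
      · exact h ▸ Prov.imp_self S A
      · exact .mp (.hyp h) (.ax (Ax.a1 B A))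
  | @mp X B _ _ ih1 ih2 => exact .mp ih1 (.mp ih2 (.ax (Ax.a2 A X B)))

/-- Reductio ad absurdum. -/
theorem Prov.raa {S : Set (Fml L C)} {A : Fml L C} (h : Prov (insert A.neg S) (FF L C)) :
    Prov S A :=
  .mp h.deduction (.ax (Ax.a3 A))

theorem Prov.exfalso {S : Set (Fml L C)} (h : Prov S (FF L C)) (B : Fml L C) : Prov S B :=
  .raa (h.weaken (Set.subset_insert _ _))

theorem Prov.contra {S : Set (Fml L C)} {A : Fml L C} (h1 : Prov S A) (h2 : Prov S A.neg)
    (B : Fml L C) : Prov S B :=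
  (Prov.mp h1 h2).exfalso B

theorem prov_fold_intro {S : Set (Fml L C)} (l : List (Fml L C)) {B : Fml L C}
    (h : Prov (S ∪ {x | x ∈ l}) B) : Prov S (l.foldr Fml.imp B) := by
  induction l generalizing S with
  | nil =>
      simp only [List.foldr_nil]
      refine h.weaken ?_
      intro x hx
      rcases hx with hx | hx
      · exact hx
      · simp at hx
  | cons a l ih =>
      simp only [List.foldr_cons]
      refine Prov.deduction (ih (h.weaken ?_))
      intro x hx
      rcases hx with hx | hx
      · exact Or.inl (Set.mem_insert_iff.2 (Or.inr hx))
      · simp only [List.mem_cons, Set.mem_setOf_eq] at hx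
        rcases hx with rfl | hx
        · exact Or.inl (Set.mem_insert _ _)
        · exact Or.inr hx

theorem prov_fold_elim {S : Set (Fml L C)} (l : List (Fml L C)) {B : Fml L C}
    (h : Prov S (l.foldr Fml.imp B)) (hl : ∀ a ∈ l, Prov S a) : Prov S B := by
  induction l generalizing B with
  | nil => exact h
  | cons a l ih =>
      exact ih (Prov.mp (hl a (List.mem_cons_self)) h)
        (fun x hx => hl x (List.mem_cons_of_mem _ hx))

/-- Rank bound of a term: all its variables are `< rkT t`. -/
def rkT : Tm L C → ℕ
  | .var i => i + 1
  | .param _ => 0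
  | .func _ ts => Finset.univ.sup (fun k => rkT (ts k))

/-- Rank bound of a formula. -/
def rkF : Fml L C → ℕ
  | .pred _ ts => Finset.univ.sup (fun k => rkT (ts k))
  | .imp A B => max (rkF A) (rkF B)
  | .all A => rkF A - 1

theorem rkT_congr {t : Tm L C} {σ τ : ℕ → Tm L C}
    (h : ∀ i < rkT t, σ i = τ i) : t.subst σ = t.subst τ := by
  induction t with
  | var i => exact h i (Nat.lt_succ_self i)
  | param c => rfl
  | func f ts ih =>
      simp only [Tm.subst]
      refine congrArg _ (funext fun k => ih k (fun i hi => h i (lt_of_lt_of_le hi ?_)))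
      exact Finset.le_sup (f := fun k => rkT (ts k)) (Finset.mem_univ k)

theorem rkF_congr {A : Fml L C} {σ τ : ℕ → Tm L C}
    (h : ∀ i < rkF A, σ i = τ i) : A.subst σ = A.subst τ := by
  induction A generalizing σ τ with
  | pred P ts =>
      simp only [Fml.subst]
      refine congrArg _ (funext fun k => rkT_congr (fun i hi => h i (lt_of_lt_of_le hi ?_)))
      exact Finset.le_sup (f := fun k => rkT (ts k)) (Finset.mem_univ k)
  | imp A B ihA ihB =>
      simp only [Fml.subst]
      rw [ihA (fun i hi => h i (lt_of_lt_of_le hi (le_max_left _ _))),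
        ihB (fun i hi => h i (lt_of_lt_of_le hi (le_max_right _ _)))]
  | all A ih =>
      simp only [Fml.subst]
      refine congrArg Fml.all (ih fun i hi => ?_)
      cases i with
      | zero => rfl
      | succ n =>
          show (σ n).shift = (τ n).shift
          have hn : n < rkF (Fml.all A) := by simp only [rkF]; omega
          rw [h n hn]

theorem indep_of_rkF_le {A : Fml L C} {i : ℕ} (h : rkF A ≤ i) : A.Indep i := by
  show A.subst _ = A
  conv_rhs => rw [← subst_id A]
  exact rkF_congr (fun j hj => by
    simp only [singleSeq, if_neg (Nat.ne_of_lt (lt_of_lt_of_le hj h))])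

/-- Parameters occurring in a term. -/
def psetT : Tm L C → Set C
  | .var _ => ∅
  | .param c => {c}
  | .func _ ts => ⋃ k, psetT (ts k)

/-- Parameters occurring in a formula. -/
def psetF : Fml L C → Set C
  | .pred _ ts => ⋃ k, psetT (ts k)
  | .imp A B => psetF A ∪ psetF B
  | .all A => psetF A

theorem msubT_pset_congr {t : Tm L C} {σ : ℕ → Tm L C'} {π π' : C → Tm L C'}
    (h : ∀ c ∈ psetT t, π c = π' c) : msubT t σ π = msubT t σ π' := by
  induction t with
  | var i => rfl
  | param c => exact h c rfl
  | func f ts ih =>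
      simp only [msubT]
      exact congrArg _ (funext fun k => ih k (fun c hc => h c (Set.mem_iUnion.2 ⟨k, hc⟩)))

theorem msubF_pset_congr {A : Fml L C} {σ : ℕ → Tm L C'} {π π' : C → Tm L C'}
    (h : ∀ c ∈ psetF A, π c = π' c) : msubF A σ π = msubF A σ π' := by
  induction A generalizing σ π π' with
  | pred P ts =>
      simp only [msubF]
      exact congrArg _
        (funext fun k => msubT_pset_congr (fun c hc => h c (Set.mem_iUnion.2 ⟨k, hc⟩)))
  | imp A B ihA ihB =>
      simp only [msubF]
      rw [ihA (fun c hc => h c (Or.inl hc)), ihB (fun c hc => h c (Or.inr hc))]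
  | all A ih =>
      simp only [msubF]
      rw [ih (fun c hc => congrArg Tm.shift (h c hc))]

theorem psetT_msub {t : Tm L C} {σ : ℕ → Tm L C'} {π : C → Tm L C'} :
    psetT (msubT t σ π) ⊆ (⋃ i, psetT (σ i)) ∪ ⋃ d ∈ psetT t, psetT (π d) := by
  induction t with
  | var i => exact fun c hc => Or.inl (Set.mem_iUnion.2 ⟨i, hc⟩)
  | param d => exact fun c hc => Or.inr (Set.mem_iUnion₂.2 ⟨d, rfl, hc⟩)
  | func f ts ih =>
      intro c hc
      obtain ⟨k, hk⟩ := Set.mem_iUnion.1 hc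
      rcases ih k hk with h | h
      · exact Or.inl h
      · obtain ⟨d, hd, hcd⟩ := Set.mem_iUnion₂.1 h
        exact Or.inr (Set.mem_iUnion₂.2 ⟨d, Set.mem_iUnion.2 ⟨k, hd⟩, hcd⟩)

theorem psetT_shift {t : Tm L C} : psetT (t.shift) ⊆ psetT t := by
  rw [shift_eq_msubT]
  intro c hc
  rcases psetT_msub hc with h | h
  · obtain ⟨i, hi⟩ := Set.mem_iUnion.1 h
    exact absurd hi (by simp [psetT])
  · obtain ⟨d, hd, hcd⟩ := Set.mem_iUnion₂.1 h
    rcases hcd with rfl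
    exact hd

theorem psetF_msub {A : Fml L C} {σ : ℕ → Tm L C'} {π : C → Tm L C'} :
    psetF (msubF A σ π) ⊆ (⋃ i, psetT (σ i)) ∪ ⋃ d ∈ psetF A, psetT (π d) := by
  induction A generalizing σ π with
  | pred P ts =>
      intro c hc
      obtain ⟨k, hk⟩ := Set.mem_iUnion.1 hc
      rcases psetT_msub hk with h | h
      · exact Or.inl h
      · obtain ⟨d, hd, hcd⟩ := Set.mem_iUnion₂.1 h
        exact Or.inr (Set.mem_iUnion₂.2 ⟨d, Set.mem_iUnion.2 ⟨k, hd⟩, hcd⟩)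
  | imp A B ihA ihB =>
      intro c hc
      rcases hc with hc | hc
      · rcases ihA hc with h | h
        · exact Or.inl h
        · obtain ⟨d, hd, hcd⟩ := Set.mem_iUnion₂.1 h
          exact Or.inr (Set.mem_iUnion₂.2 ⟨d, Or.inl hd, hcd⟩)
      · rcases ihB hc with h | h
        · exact Or.inl h
        · obtain ⟨d, hd, hcd⟩ := Set.mem_iUnion₂.1 h
          exact Or.inr (Set.mem_iUnion₂.2 ⟨d, Or.inr hd, hcd⟩)
  | all A ih =>
      intro c hc
      rcases ih hc with h | h
      · obtain ⟨i, hi⟩ := Set.mem_iUnion.1 h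
        cases i with
        | zero => exact absurd hi (by simp [liftSeq, psetT])
        | succ n =>
            have := psetT_shift (t := σ n) hi
            exact Or.inl (Set.mem_iUnion.2 ⟨n, this⟩)
      · obtain ⟨d, hd, hcd⟩ := Set.mem_iUnion₂.1 h
        exact Or.inr (Set.mem_iUnion₂.2 ⟨d, hd, psetT_shift hcd⟩)

theorem psetF_ofE {A : Fml L Empty} : psetF (Fml.ofE A : Fml L C) = ∅ := by
  rw [ofE_eq_msubF]
  refine Set.eq_empty_of_subset_empty (fun c hc => ?_)
  rcases psetF_msub hc with h | h
  · obtain ⟨i, hi⟩ := Set.mem_iUnion.1 h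
    exact absurd hi (by simp [psetT])
  · obtain ⟨d, _, _⟩ := Set.mem_iUnion₂.1 h
    exact d.elim

theorem psetF_subst {A : Fml L C} {s : ℕ → Tm L C} :
    psetF (A.subst s) ⊆ psetF A ∪ ⋃ i, psetT (s i) := by
  rw [subst_eq_msubF]
  intro c hc
  rcases psetF_msub hc with h | h
  · exact Or.inr h
  · obtain ⟨d, hd, hcd⟩ := Set.mem_iUnion₂.1 h
    rcases hcd with rfl
    exact Or.inl hd

theorem prov_empty_all {A : Fml L C} (h : Prov (∅ : Set (Fml L C)) A) :
    Prov (∅ : Set (Fml L C)) A.all := by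
  induction h with
  | ax h => exact .ax (Ax.gen _ h)
  | hyp h => exact absurd h (Set.notMem_empty _)
  | @mp X B _ _ ih1 ih2 => exact .mp ih1 (.mp ih2 (.ax (Ax.a4 X B)))

theorem prov_empty_subst {A : Fml L C} (h : Prov (∅ : Set (Fml L C)) A) (s : ℕ → Tm L C) :
    Prov (∅ : Set (Fml L C)) (A.subst s) := by
  have := h.msub s Tm.param
  rw [Set.image_empty] at this
  rw [subst_eq_msubF]
  exact this

theorem allQ_imp {S : Set (Fml L C)} {X Y : Fml L C} {k : ℕ}
    (h : Prov S (allQ k (X.imp Y))) : Prov S ((allQ k X).imp (allQ k Y)) :=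
  .mp h (.ax (Ax.a4 _ _))

theorem subst_allQseq_of_indep {D : Fml L C} {k : ℕ} (hD : D.Indep k) :
    D.subst (fun j => if j = k then Tm.var 0 else Tm.var (j+1)) = D.subst (plusSeq L C) := by
  conv_lhs => rw [← hD]
  conv_rhs => rw [← hD]
  rw [subst_subst, subst_subst]
  refine rkF_congr (fun i _ => ?_)
  by_cases hik : i = k <;>
    simp [singleSeq, hik, Tm.subst, plusSeq, Nat.succ_ne_zero, (by omega : k + 1 ≠ k)]

theorem indep_imp_allQ {S : Set (Fml L C)} {D : Fml L C} {k : ℕ} (hD : D.Indep k) :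
    Prov S (D.imp (allQ k D)) := by
  have h : allQ k D = Fml.all (D.subst (plusSeq L C)) := by
    rw [allQ, subst_allQseq_of_indep hD]
  rw [h]
  exact .ax (Ax.a6 D)

theorem allQ_fold {S : Set (Fml L C)} {B : Fml L C} {k : ℕ} (l : List (Fml L C))
    (hD : ∀ D ∈ l, D.Indep k) (hmem : ∀ D ∈ l, D ∈ S)
    (h : Prov S (allQ k (l.foldr Fml.imp B))) : Prov S (allQ k B) := by
  induction l with
  | nil => exact h
  | cons a l ih =>
      have h2 : Prov S ((allQ k a).imp (allQ k (l.foldr Fml.imp B))) := allQ_imp h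
      have h3 : Prov S (allQ k a) :=
        .mp (.hyp (hmem a (List.mem_cons_self))) (indep_imp_allQ (hD a (List.mem_cons_self)))
      exact ih (fun D hDl => hD D (List.mem_cons_of_mem _ hDl))
        (fun D hDl => hmem D (List.mem_cons_of_mem _ hDl)) (.mp h3 h2)

theorem allQ_inst {Ah : Fml L C} {k : ℕ} (hA : Ah.Indep (k+1)) :
    allQ k (Ah.subst (instSeq (Tm.var k))) = Ah.all := by
  rw [allQ, subst_subst]
  congr 1
  have hτ : (fun i => (instSeq (Tm.var k) i).subst
      (fun j => if j = k then Tm.var 0 else Tm.var (j+1)))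
      = (fun j => if j = k + 1 then Tm.var 0 else (Tm.var j : Tm L C)) := by
    funext i
    cases i with
    | zero => simp [instSeq, Tm.subst]
    | succ n =>
        show (Tm.var n : Tm L C).subst _ = _
        by_cases hnk : n = k <;> simp [Tm.subst, hnk, Nat.succ_ne_zero]
  rw [hτ]
  conv_lhs => rw [← hA]
  rw [subst_subst]
  conv_rhs => rw [← hA]
  refine rkF_congr (fun i _ => ?_)
  by_cases hik : i = k + 1 <;>
    simp [singleSeq, hik, Tm.subst, (by omega : k + 2 ≠ k + 1)]

/-- Fresh-variable universal generalization. -/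
theorem fresh_var_forall {Ah : Fml L C} {k : ℕ} (l : List (Fml L C))
    (hD : ∀ D ∈ l, D.Indep k) (hA : Ah.Indep (k+1))
    (h : Prov {x | x ∈ l} (Ah.subst (instSeq (Tm.var k)))) :
    Prov {x | x ∈ l} Ah.all := by
  set B := Ah.subst (instSeq (Tm.var k)) with hB
  have h1 : Prov (∅ : Set (Fml L C)) (l.foldr Fml.imp B) :=
    prov_fold_intro l (h.weaken (by rw [Set.empty_union]))
  have h2 : Prov (∅ : Set (Fml L C)) (allQ k (l.foldr Fml.imp B)) := by
    have := prov_empty_subst h1 (fun j => if j = k then Tm.var 0 else Tm.var (j+1))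
    have hfold : ∀ (B' : Fml L C) (l' : List (Fml L C)) (s : ℕ → Tm L C),
        (l'.foldr Fml.imp B').subst s = (l'.map (fun D => D.subst s)).foldr Fml.imp (B'.subst s) := by
      intro B' l' s
      induction l' with
      | nil => rfl
      | cons a l' ih => simp only [List.foldr_cons, List.map_cons, Fml.subst, ih]
    exact prov_empty_all this
  have h3 : Prov {x | x ∈ l} (allQ k B) :=
    allQ_fold l hD (fun D hDl => hDl) (h2.weaken (Set.empty_subset _))
  rw [hB, allQ_inst hA] at h3
  exact h3

/-- Parameter levels for the Henkin construction. -/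
def Par (L : Lang) : ℕ → Type
  | 0 => Empty
  | n+1 => Par L n ⊕ Fml L (Par L n)

/-- The Henkin constants: a witness for each formula at each level. -/
def HCon (L : Lang) : Type := Σ n, Fml L (Par L n)

/-- Interpretation of level-`n` parameters as Henkin constants. -/
def rho : ∀ n, Par L n → HCon L
  | n+1, Sum.inl p => rho n p
  | n+1, Sum.inr A => ⟨n, A⟩

theorem lv_rho : ∀ n (p : Par L n), (rho n p).1 < n
  | n+1, Sum.inl p => lt_trans (lv_rho n p) (Nat.lt_succ_self n)
  | n+1, Sum.inr _ => Nat.lt_succ_self n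

/-- Pushing a level-`n` term into the full Henkin language. -/
def pushT (n : ℕ) (t : Tm L (Par L n)) : Tm L (HCon L) :=
  msubT t Tm.var (fun p => .param (rho n p))

/-- Pushing a level-`n` formula into the full Henkin language. -/
def pushF (n : ℕ) (A : Fml L (Par L n)) : Fml L (HCon L) :=
  msubF A Tm.var (fun p => .param (rho n p))

/-- One-step level lift. -/
def liftP1T {n : ℕ} (t : Tm L (Par L n)) : Tm L (Par L (n+1)) :=
  msubT t Tm.var (fun p => .param (Sum.inl p))

def liftP1F {n : ℕ} (A : Fml L (Par L n)) : Fml L (Par L (n+1)) :=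
  msubF A Tm.var (fun p => .param (Sum.inl p))

theorem pushT_mono {n : ℕ} (t : Tm L (Par L n)) : pushT (n+1) (liftP1T t) = pushT n t := by
  unfold pushT liftP1T
  rw [msubT_msubT]
  exact msubT_congr (fun i => rfl) (fun p => rfl)

theorem pushF_mono {n : ℕ} (A : Fml L (Par L n)) : pushF (n+1) (liftP1F A) = pushF n A := by
  unfold pushF liftP1F
  rw [msubF_msubF]
  exact msubF_congr (fun i => rfl) (fun p => rfl)

theorem coverT_mono {t : Tm L (HCon L)} {m : ℕ} (h : ∃ u, pushT m u = t) :
    ∀ N, m ≤ N → ∃ u, pushT N u = t := by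
  intro N hmN
  induction N, hmN using Nat.le_induction with
  | base => exact h
  | succ n hmn ih =>
      obtain ⟨u, hu⟩ := ih
      exact ⟨liftP1T u, (pushT_mono u).trans hu⟩

theorem coverF_mono {B : Fml L (HCon L)} {m : ℕ} (h : ∃ A, pushF m A = B) :
    ∀ N, m ≤ N → ∃ A, pushF N A = B := by
  intro N hmN
  induction N, hmN using Nat.le_induction with
  | base => exact h
  | succ n hmn ih =>
      obtain ⟨A, hA⟩ := ih
      exact ⟨liftP1F A, (pushF_mono A).trans hA⟩

theorem coverT : ∀ t : Tm L (HCon L), ∃ n u, pushT n u = t := by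
  intro t
  induction t with
  | var i => exact ⟨0, .var i, rfl⟩
  | param c =>
      obtain ⟨m, X⟩ := c
      exact ⟨m+1, .param (Sum.inr X), rfl⟩
  | func f ts ih =>
      choose ν υ h using ih
      set N := Finset.univ.sup ν with hN
      have hk : ∀ k, ∃ u, pushT N u = ts k := fun k =>
        coverT_mono ⟨υ k, h k⟩ N (Finset.le_sup (Finset.mem_univ k))
      choose u hu using hk
      exact ⟨N, .func f u, by
        show Tm.func f (fun k => pushT N (u k)) = Tm.func f ts
        exact congrArg _ (funext hu)⟩

theorem pushF_all {n : ℕ} (A : Fml L (Par L n)) :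
    pushF n (Fml.all A) = Fml.all (pushF n A) := by
  unfold pushF
  show Fml.all (msubF A (liftSeq Tm.var) _) = _
  rw [liftSeq_var]
  exact congrArg Fml.all (msubF_congr (fun i => rfl) (fun p => rfl))

theorem coverF : ∀ B : Fml L (HCon L), ∃ n A, pushF n A = B := by
  intro B
  induction B with
  | pred P ts =>
      have ih : ∀ k, ∃ n u, pushT n u = ts k := fun k => coverT (ts k)
      choose ν υ h using ih
      set N := Finset.univ.sup ν with hN
      have hk : ∀ k, ∃ u, pushT N u = ts k := fun k =>
        coverT_mono ⟨υ k, h k⟩ N (Finset.le_sup (Finset.mem_univ k))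
      choose u hu using hk
      exact ⟨N, .pred P u, by
        show Fml.pred P (fun k => pushT N (u k)) = Fml.pred P ts
        exact congrArg _ (funext hu)⟩
  | imp X Y ihX ihY =>
      obtain ⟨n1, A1, h1⟩ := ihX
      obtain ⟨n2, A2, h2⟩ := ihY
      obtain ⟨A1', h1'⟩ := coverF_mono ⟨A1, h1⟩ (max n1 n2) (le_max_left _ _)
      obtain ⟨A2', h2'⟩ := coverF_mono ⟨A2, h2⟩ (max n1 n2) (le_max_right _ _)
      exact ⟨max n1 n2, .imp A1' A2', by
        show Fml.imp (pushF _ A1') (pushF _ A2') = _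
        rw [h1', h2']⟩
  | all X ih =>
      obtain ⟨n, A, h⟩ := ih
      exact ⟨n, .all A, by rw [pushF_all, h]⟩

theorem psetF_push {n : ℕ} (A : Fml L (Par L n)) :
    psetF (pushF n A) ⊆ {c : HCon L | c.1 < n} := by
  intro c hc
  rcases psetF_msub hc with h | h
  · obtain ⟨i, hi⟩ := Set.mem_iUnion.1 h
    exact absurd hi (by simp [psetT])
  · obtain ⟨d, _, hcd⟩ := Set.mem_iUnion₂.1 h
    rcases hcd with rfl
    exact lv_rho n d

/-- The Henkin axiom attached to the constant `⟨n, A⟩`. -/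
def hkAx (L : Lang) (w : HCon L) : Fml L (HCon L) :=
  ((pushF w.1 w.2).subst (instSeq (.param w))).imp (Fml.all (pushF w.1 w.2))

theorem psetF_FF : psetF (FF L C) = ∅ := by
  refine Set.eq_empty_of_subset_empty (fun c hc => ?_)
  obtain ⟨k, _⟩ := Set.mem_iUnion.1 hc
  exact k.elim0

theorem psetF_neg (A : Fml L C) : psetF A.neg = psetF A := by
  show psetF A ∪ psetF (FF L C) = psetF A
  rw [psetF_FF, Set.union_empty]

theorem psetF_hkAx (w : HCon L) :
    psetF (hkAx L w) ⊆ {c : HCon L | c.1 < w.1} ∪ {w} := by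
  intro c hc
  rcases hc with hc | hc
  · rcases psetF_subst hc with h | h
    · exact Or.inl (psetF_push _ h)
    · obtain ⟨i, hi⟩ := Set.mem_iUnion.1 h
      cases i with
      | zero => exact Or.inr hi
      | succ j => exact absurd hi (by simp [instSeq, psetT])
  · exact Or.inl (psetF_push _ hc)

theorem not_imp_left {S : Set (Fml L C)} {X Y : Fml L C} (h : Prov S (X.imp Y).neg) :
    Prov S X := by
  refine Prov.raa ?_
  have hXY : Prov (insert X.neg S) (X.imp Y) := by
    refine Prov.deduction ?_
    exact Prov.contra (.hyp (Set.mem_insert _ _))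
      (.hyp (Set.mem_insert_iff.2 (Or.inr (Set.mem_insert _ _)))) Y
  exact Prov.mp hXY (h.weaken (Set.subset_insert _ _))

theorem not_imp_right {S : Set (Fml L C)} {X Y : Fml L C} (h : Prov S (X.imp Y).neg) :
    Prov S Y.neg := by
  refine Prov.deduction ?_
  have hXY : Prov (insert Y S) (X.imp Y) := .mp (.hyp (Set.mem_insert _ _)) (.ax (Ax.a1 Y X))
  exact .mp hXY (h.weaken (Set.subset_insert _ _))

theorem image_fix {α : Type*} {S : Set α} {f : α → α} (h : ∀ x ∈ S, f x = x) : f '' S = S := by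
  ext x
  constructor
  · rintro ⟨y, hy, rfl⟩; rw [h y hy]; exact hy
  · intro hx; exact ⟨x, hx, h x hx⟩

theorem foldr_max_base (l : List ℕ) (b : ℕ) : b ≤ l.foldr max b := by
  induction l with
  | nil => exact le_refl b
  | cons a l ih => exact le_trans ih (le_max_right _ _)

theorem foldr_max_mem (l : List ℕ) (b : ℕ) : ∀ x ∈ l, x ≤ l.foldr max b := by
  induction l with
  | nil => intro x hx; simp at hx
  | cons a l ih =>
      intro x hx
      rcases List.mem_cons.1 hx with rfl | hx
      · exact le_max_left _ _
      · exact le_trans (ih x hx) (le_max_right _ _)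

/-- Adding the Henkin axioms preserves consistency. -/
theorem con_extend_henkin {T : Set (Fml L (HCon L))} (hT : ∀ D ∈ T, psetF D = ∅)
    (hcon : ¬ Prov T (FF L (HCon L))) :
    ¬ Prov (T ∪ Set.range (hkAx L)) (FF L (HCon L)) := by
  classical
  have main : ∀ (N : ℕ) (W : Finset (HCon L)), W.card ≤ N →
      ¬ Prov (T ∪ hkAx L '' ↑W) (FF L (HCon L)) := by
    intro N
    induction N with
    | zero =>
        intro W hW
        rw [Finset.card_eq_zero.1 (Nat.le_zero.1 hW)]
        simpa using hcon
    | succ N ih =>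
        intro W hW
        rcases W.eq_empty_or_nonempty with rfl | hne
        · simpa using hcon
        obtain ⟨ws, hws, hmax⟩ := W.exists_max_image (fun w => w.1) hne
        set W' := W.erase ws with hW'
        set S' : Set (Fml L (HCon L)) := T ∪ hkAx L '' ↑W' with hS'
        have hconS' : ¬ Prov S' (FF L (HCon L)) := by
          refine ih W' ?_
          have hpos : 0 < W.card := Finset.card_pos.2 hne
          rw [hW', Finset.card_erase_of_mem hws]
          omega
        intro hproof
        have hfresh : ∀ D ∈ S', ws ∉ psetF D := by
          rintro D (hD | ⟨w', hw', rfl⟩) hmem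
          · rw [hT D hD] at hmem; exact hmem
          · rcases psetF_hkAx w' hmem with h | h
            · have h1 : w'.1 ≤ ws.1 := hmax w' (Finset.mem_of_mem_erase hw')
              exact absurd h (by simp only [Set.mem_setOf_eq]; omega)
            · rcases h with rfl
              exact Finset.ne_of_mem_erase hw' rfl
        have h1 : Prov (insert (hkAx L ws) S') (FF L (HCon L)) := by
          refine hproof.weaken ?_
          rintro x (hx | ⟨w', hw', rfl⟩)
          · exact Set.mem_insert_iff.2 (Or.inr (Or.inl hx))
          · by_cases hww : w' = ws
            · rw [hww]; exact Set.mem_insert _ _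
            · exact Set.mem_insert_iff.2 (Or.inr (Or.inr
                ⟨w', Finset.mem_coe.2 (Finset.mem_erase.2 ⟨hww, hw'⟩), rfl⟩))
        have h2 : Prov S' (hkAx L ws).neg := Prov.deduction h1
        set Ab := pushF ws.1 ws.2 with hAb
        have hX : Prov S' (Ab.subst (instSeq (.param ws))) := not_imp_left h2
        have hY : Prov S' (Fml.all Ab).neg := not_imp_right h2
        obtain ⟨F1, hF1sub, hF1fin, hF1⟩ := hX.finite
        obtain ⟨F2, hF2sub, hF2fin, hF2⟩ := hY.finite
        set F := F1 ∪ F2 with hF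
        have hFsub : F ⊆ S' := Set.union_subset hF1sub hF2sub
        have hFfin : F.Finite := hF1fin.union hF2fin
        have hXF : Prov F (Ab.subst (instSeq (.param ws))) := hF1.weaken Set.subset_union_left
        have hYF : Prov F (Fml.all Ab).neg := hF2.weaken Set.subset_union_right
        obtain ⟨lF, hlF⟩ : ∃ l : List (Fml L (HCon L)), F = {x | x ∈ l} :=
          ⟨hFfin.toFinset.toList, by ext x; simp⟩
        set k := (lF.map rkF).foldr max (rkF Ab) with hk
        have hk1 : ∀ D ∈ lF, rkF D ≤ k :=
          fun D hD => foldr_max_mem _ _ (rkF D) (List.mem_map_of_mem (f := rkF) hD)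
        have hk2 : rkF Ab ≤ k := foldr_max_base _ _
        set π : HCon L → Tm L (HCon L) := fun c => if c = ws then Tm.var k else Tm.param c
          with hπ
        have hπpset : ∀ c ∈ psetF Ab, π c = Tm.param c := by
          intro c hc
          have : c.1 < ws.1 := psetF_push _ hc
          exact if_neg (fun he => absurd this (by rw [he]; exact lt_irrefl _))
        have himg : (fun B => msubF B Tm.var π) '' F = F := by
          refine image_fix (fun D hD => ?_)
          rw [msubF_pset_congr (π' := Tm.param) (fun c hc =>
            if_neg (by intro he; exact hfresh D (hFsub hD) (he ▸ hc))), msubF_id]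
        have hmX : msubF (Ab.subst (instSeq (.param ws))) Tm.var π
            = Ab.subst (instSeq (Tm.var k)) := by
          rw [subst_eq_msubF, msubF_msubF, subst_eq_msubF]
          refine Eq.trans (msubF_congr (σ' := instSeq (Tm.var k)) (π' := π)
            (fun i => ?_) (fun c => rfl)) (msubF_pset_congr hπpset)
          cases i with
          | zero => show π ws = Tm.var k; simp [hπ]
          | succ n => rfl
        have htrans := hXF.msub Tm.var π
        rw [himg, hmX] at htrans
        rw [hlF] at htrans hYF
        have hall : Prov {x | x ∈ lF} Ab.all := by
          refine fresh_var_forall lF (fun D hD => indep_of_rkF_le (hk1 D hD))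
            (indep_of_rkF_le (le_trans hk2 (Nat.le_succ k))) htrans
        have hff : Prov {x | x ∈ lF} (FF L (HCon L)) := .mp hall hYF
        rw [← hlF] at hff
        exact hconS' (hff.weaken hFsub)
  intro hproof
  obtain ⟨G, hGsub, hGfin, hG⟩ := hproof.finite
  have key : ∀ (Gr : Set (Fml L (HCon L))), Gr.Finite → Gr ⊆ Set.range (hkAx L) →
      ∃ W : Finset (HCon L), Gr ⊆ hkAx L '' ↑W := by
    intro Gr hfin
    refine Set.Finite.induction_on
      (motive := fun s _ => s ⊆ Set.range (hkAx L) → ∃ W : Finset (HCon L), s ⊆ hkAx L '' ↑W)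
      _ hfin (fun _ => ⟨∅, by simp⟩) ?_
    intro a s ha hsfin ih hsub
    · obtain ⟨w, hw⟩ := hsub (Set.mem_insert _ _)
      obtain ⟨W, hW⟩ := ih (fun x hx => hsub (Set.mem_insert_iff.2 (Or.inr hx)))
      refine ⟨insert w W, ?_⟩
      rintro x (rfl | hx)
      · exact ⟨w, by simp, hw.symm ▸ rfl⟩
      · obtain ⟨w', hw', rfl⟩ := hW hx
        exact ⟨w', by simp [Finset.mem_coe.1 hw'], rfl⟩
  have hGR : (G ∩ Set.range (hkAx L)).Finite := hGfin.subset Set.inter_subset_left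
  obtain ⟨W, hW⟩ := key _ hGR Set.inter_subset_right
  refine main W.card W le_rfl (hG.weaken ?_)
  intro x hx
  rcases hGsub hx with h | h
  · exact Or.inl h
  · exact Or.inr (hW ⟨hx, h⟩)

/-- Lindenbaum's lemma. -/
theorem lindenbaum {S : Set (Fml L C)} (h : ¬ Prov S (FF L C)) :
    ∃ M, S ⊆ M ∧ (¬ Prov M (FF L C)) ∧ ∀ B, B ∉ M → Prov (insert B M) (FF L C) := by
  classical
  set 𝒮 : Set (Set (Fml L C)) := {T | S ⊆ T ∧ ¬ Prov T (FF L C)} with h𝒮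
  have hzorn := zorn_subset_nonempty 𝒮 ?_ S ⟨subset_rfl, h⟩
  · obtain ⟨M, hSM, hmax⟩ := hzorn
    refine ⟨M, hSM, hmax.1.2, ?_⟩
    intro B hB
    by_contra hcon
    have hmem : insert B M ∈ 𝒮 := ⟨hSM.trans (Set.subset_insert _ _), hcon⟩
    have := hmax.2 hmem (Set.subset_insert _ _)
    exact hB (this (Set.mem_insert _ _))
  · intro c hc hchain hne
    refine ⟨⋃₀ c, ⟨?_, ?_⟩, fun s hs => Set.subset_sUnion_of_mem hs⟩
    · obtain ⟨t, ht⟩ := hne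
      exact (hc ht).1.trans (Set.subset_sUnion_of_mem ht)
    · intro hprov
      obtain ⟨T0, hT0sub, hT0fin, hT0⟩ := hprov.finite
      -- a finite subset of a chain union is inside one member
      have key : ∀ (T : Set (Fml L C)), T.Finite → T ⊆ ⋃₀ c → ∃ m ∈ c, T ⊆ m := by
        intro T hfin
        refine Set.Finite.induction_on
          (motive := fun T _ => T ⊆ ⋃₀ c → ∃ m ∈ c, T ⊆ m) _ hfin ?_ ?_
        · intro _
          obtain ⟨t, ht⟩ := hne
          exact ⟨t, ht, Set.empty_subset _⟩
        · intro a s _ _ ih hsub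
          obtain ⟨m1, hm1, ham1⟩ := hsub (Set.mem_insert _ _)
          obtain ⟨m2, hm2, hsm2⟩ := ih (fun x hx => hsub (Set.mem_insert_iff.2 (Or.inr hx)))
          rcases eq_or_ne m1 m2 with rfl | hne12
          · exact ⟨m1, hm1, Set.insert_subset ham1 hsm2⟩
          · rcases hchain hm1 hm2 hne12 with h12 | h21
            · exact ⟨m2, hm2, Set.insert_subset (h12 ham1) hsm2⟩
            · exact ⟨m1, hm1, Set.insert_subset ham1 (hsm2.trans h21)⟩
      obtain ⟨m, hm, hTm⟩ := key T0 hT0fin hT0sub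
      exact (hc hm).2 (hT0.weaken hTm)

theorem max_closed {M : Set (Fml L C)} (hcon : ¬ Prov M (FF L C))
    (hmax : ∀ B, B ∉ M → Prov (insert B M) (FF L C)) {B : Fml L C} (h : Prov M B) : B ∈ M := by
  by_contra hB
  exact hcon (.mp h (Prov.deduction (hmax B hB)))

/-- A maximal consistent set containing the Henkin axioms is a perfect valuation. -/
theorem perfect_of_max {M : Set (Fml L (HCon L))} (hcon : ¬ Prov M (FF L (HCon L)))
    (hmax : ∀ B, B ∉ M → Prov (insert B M) (FF L (HCon L)))
    (hH : Set.range (hkAx L) ⊆ M) : PerfectVal M := by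
  classical
  refine ⟨fun hFF => hcon (.hyp hFF), ?_, ?_⟩
  · intro A B
    constructor
    · intro h
      by_cases hA : A ∈ M
      · exact Or.inr (max_closed hcon hmax (.mp (.hyp hA) (.hyp h)))
      · exact Or.inl hA
    · rintro (hA | hB)
      · refine max_closed hcon hmax (Prov.deduction ?_)
        exact Prov.contra (.hyp (Set.mem_insert _ _))
          ((Prov.deduction (hmax A hA)).weaken (Set.subset_insert _ _)) B
      · exact max_closed hcon hmax (.mp (.hyp hB) (.ax (Ax.a1 B A)))
  · intro A
    constructor
    · intro h t
      exact max_closed hcon hmax (.mp (.hyp h) (.ax (Ax.a5 A t)))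
    · intro h
      by_contra hall
      obtain ⟨n, A₀, hA₀⟩ := coverF A
      have hhk : hkAx L ⟨n, A₀⟩ ∈ M := hH (Set.mem_range_self _)
      have hinst : A.subst (instSeq (.param ⟨n, A₀⟩)) ∈ M := h _
      have : Fml.all A ∈ M := by
        have := Prov.mp (.hyp hinst) (.hyp (show (A.subst (instSeq (.param ⟨n, A₀⟩))).imp
          (Fml.all A) ∈ M from by rwa [show ((A.subst (instSeq (.param ⟨n, A₀⟩))).imp
          (Fml.all A)) = hkAx L ⟨n, A₀⟩ from by rw [show hkAx L ⟨n, A₀⟩ = ((pushF n A₀).subst (instSeq (.param ⟨n, A₀⟩))).imp (Fml.all (pushF n A₀)) from rfl]; rw [hA₀]]))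
        exact max_closed hcon hmax this
      exact hall this

theorem subst_FF (s : ℕ → Tm L C) : (FF L C).subst s = FF L C := by
  show Fml.pred _ _ = Fml.pred _ _
  exact congrArg _ (funext fun k => k.elim0)

theorem subst_neg (A : Fml L C) (s : ℕ → Tm L C) : (A.neg).subst s = (A.subst s).neg := by
  show Fml.imp _ _ = Fml.imp _ _
  rw [subst_FF]

theorem subst_inst_comm (A : Fml L C) (t : Tm L C) (s : ℕ → Tm L C) :
    (A.subst (instSeq t)).subst s = (A.subst (liftSeq s)).subst (instSeq (t.subst s)) := by
  have h := msubF_inst A t s Tm.param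
  rw [show (fun c => (Tm.param c : Tm L C).shift) = (Tm.param : C → Tm L C)
    from funext fun c => rfl] at h
  simp only [← subst_eq_msubF, ← subst_eq_msubT] at h
  exact h

theorem subst_plus_comm (A : Fml L C) (s : ℕ → Tm L C) :
    (A.subst (plusSeq L C)).subst (liftSeq s) = (A.subst s).subst (plusSeq L C) := by
  have h := msubF_plus A s Tm.param
  rw [show (fun c => (Tm.param c : Tm L C).shift) = (Tm.param : C → Tm L C)
    from funext fun c => rfl] at h
  simp only [← subst_eq_msubF] at h
  exact h

theorem plus_inst_cancel (X : Fml L C) (u : Tm L C) :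
    (X.subst (plusSeq L C)).subst (instSeq u) = X := by
  rw [subst_subst]
  have : (fun i => (plusSeq L C i).subst (instSeq u)) = Tm.var := funext fun i => rfl
  rw [this, subst_id]

/-- All substitution instances of axioms belong to every perfect valuation. -/
theorem perfect_sound {U : Set (Fml L C)} (hU : PerfectVal U) {B : Fml L C} (h : Ax B) :
    ∀ s, B.subst s ∈ U := by
  obtain ⟨hFF, himp, hall⟩ := hU
  induction h with
  | a1 A B =>
      intro s
      show (((A.subst s).imp ((B.subst s).imp (A.subst s)))) ∈ U
      by_cases hA : A.subst s ∈ U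
      · exact (himp _ _).2 (Or.inr ((himp _ _).2 (Or.inr hA)))
      · exact (himp _ _).2 (Or.inl hA)
  | a2 A B D =>
      intro s
      show ((A.subst s).imp ((B.subst s).imp (D.subst s))).imp
        (((A.subst s).imp (B.subst s)).imp ((A.subst s).imp (D.subst s))) ∈ U
      simp only [himp]
      tauto
  | a3 A =>
      intro s
      show ((A.neg.neg).subst s).imp (A.subst s) ∈ U
      rw [subst_neg, subst_neg]
      simp only [Fml.neg, himp, iff_false_intro hFF]
      tauto
  | a4 A B =>
      intro s
      show (Fml.all ((A.imp B).subst (liftSeq s))).imp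
        ((Fml.all (A.subst (liftSeq s))).imp (Fml.all (B.subst (liftSeq s)))) ∈ U
      refine (himp _ _).2 ?_
      by_cases h1 : Fml.all ((A.imp B).subst (liftSeq s)) ∈ U
      · refine Or.inr ((himp _ _).2 ?_)
        by_cases h2 : Fml.all (A.subst (liftSeq s)) ∈ U
        · refine Or.inr ((hall _).2 (fun t => ?_))
          have hAB := (hall _).1 h1 t
          have hA := (hall _).1 h2 t
          have := (himp ((A.subst (liftSeq s)).subst (instSeq t))
            ((B.subst (liftSeq s)).subst (instSeq t))).1 hAB
          rcases this with h | h
          · exact absurd hA h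
          · exact h
        · exact Or.inl h2
      · exact Or.inl h1
  | a5 A t =>
      intro s
      show (Fml.all (A.subst (liftSeq s))).imp ((A.subst (instSeq t)).subst s) ∈ U
      refine (himp _ _).2 ?_
      by_cases h1 : Fml.all (A.subst (liftSeq s)) ∈ U
      · refine Or.inr ?_
        rw [subst_inst_comm]
        exact (hall _).1 h1 (t.subst s)
      · exact Or.inl h1
  | a6 A =>
      intro s
      show (A.subst s).imp (Fml.all ((A.subst (plusSeq L C)).subst (liftSeq s))) ∈ U
      refine (himp _ _).2 ?_
      by_cases hA : A.subst s ∈ U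
      · refine Or.inr ?_
        rw [subst_plus_comm]
        refine (hall _).2 (fun u => ?_)
        rw [plus_inst_cancel]
        exact hA
      · exact Or.inl hA
  | gen A h ih =>
      intro s
      show Fml.all (A.subst (liftSeq s)) ∈ U
      refine (hall _).2 (fun t => ?_)
      rw [subst_subst]
      exact ih _

theorem logval_isFilter {V : Set (Fml L Empty)} (h : LogicalValuation V) : IsFilter V := by
  obtain ⟨C', U, t, hU, rfl⟩ := h
  constructor
  · intro A hA
    show (A.ofE).subst t ∈ U
    have hax : Ax (Fml.ofE A : Fml L C') := by
      rw [ofE_eq_msubF]; exact hA.msub _ _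
    exact perfect_sound hU hax t
  · intro A B hA hAB
    have := (hU.2.1 ((Fml.ofE A : Fml L C').subst t) ((Fml.ofE B : Fml L C').subst t)).1 hAB
    rcases this with h | h
    · exact absurd hA h
    · exact h

theorem prov_filter {I : Set (Fml L Empty)} (hI : IsFilter I) {B : Fml L Empty}
    (h : Prov I B) : B ∈ I := by
  induction h with
  | ax h => exact hI.1 _ h
  | hyp h => exact h
  | mp _ _ ih1 ih2 => exact hI.2 _ _ ih1 ih2

theorem melim (B : Fml L Empty) :
    msubF (Fml.ofE B : Fml L (HCon L)) Tm.var (fun _ => Tm.var 0) = B := by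
  rw [ofE_eq_msubF, msubF_msubF]
  exact (msubF_congr (σ' := Tm.var) (π' := Tm.param) (fun i => rfl) (fun c => c.elim)).trans
    (msubF_id B)

theorem model_exists {I : Set (Fml L Empty)} (hI : IsFilter I) {A₀ : Fml L Empty}
    (hA₀ : A₀ ∉ I) : ∃ V, LogicalValuation V ∧ I ⊆ V ∧ A₀ ∉ V := by
  classical
  set T₀ : Set (Fml L (HCon L)) :=
    insert (Fml.ofE A₀ : Fml L (HCon L)).neg ((fun B => (Fml.ofE B : Fml L (HCon L))) '' I)
    with hT₀
  have hcon₀ : ¬ Prov T₀ (FF L (HCon L)) := by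
    intro h
    have h2 : Prov ((fun B => (Fml.ofE B : Fml L (HCon L))) '' I) (Fml.ofE A₀ : Fml L (HCon L)) :=
      .mp (Prov.deduction h) (.ax (Ax.a3 _))
    have h3 := h2.msub (Tm.var : ℕ → Tm L Empty) (fun _ : HCon L => (Tm.var 0 : Tm L Empty))
    rw [melim, Set.image_image] at h3
    rw [show ((fun x => msubF (Fml.ofE x : Fml L (HCon L)) Tm.var fun _ => Tm.var 0) '' I) = I
      from image_fix (fun x _ => melim x)] at h3
    exact hA₀ (prov_filter hI h3)
  have hpset₀ : ∀ D ∈ T₀, psetF D = ∅ := by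
    rintro D (rfl | ⟨B, _, rfl⟩)
    · rw [psetF_neg, psetF_ofE]
    · exact psetF_ofE
  have hcon₁ := con_extend_henkin hpset₀ hcon₀
  obtain ⟨M, hsub, hconM, hmaxM⟩ := lindenbaum hcon₁
  have hperf := perfect_of_max hconM hmaxM (Set.subset_union_right.trans hsub)
  refine ⟨{A | (Fml.ofE A : Fml L (HCon L)).subst Tm.var ∈ M}, ⟨HCon L, M, Tm.var, hperf, rfl⟩,
    ?_, ?_⟩
  · intro B hB
    show (Fml.ofE B : Fml L (HCon L)).subst Tm.var ∈ M
    rw [subst_id]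
    exact hsub (Or.inl (Set.mem_insert_iff.2 (Or.inr ⟨B, hB, rfl⟩)))
  · intro hmem
    have h1 : (Fml.ofE A₀ : Fml L (HCon L)) ∈ M := by
      rw [Set.mem_setOf_eq, subst_id] at hmem
      exact hmem
    have h2 : (Fml.ofE A₀ : Fml L (HCon L)).neg ∈ M := hsub (Or.inl (Set.mem_insert _ _))
    exact hconM (.mp (.hyp h1) (.hyp h2))

/-- Completeness: every filter is logically closed; consequently
`Con S = Ded S`, i.e. `S ⊨ A ↔ S ⊢ A`. -/
theorem completeness {L : Lang} :
    (∀ I : Set (Fml L Empty), IsFilter I → LogicallyClosed I) ∧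
    (∀ (S : Set (Fml L Empty)) (A : Fml L Empty),
      (∀ V : Set (Fml L Empty), LogicalValuation V → S ⊆ V → A ∈ V) ↔
      (∀ I : Set (Fml L Empty), IsFilter I → S ⊆ I → A ∈ I)) := by
  constructor
  · intro I hI
    refine ⟨{V | LogicalValuation V ∧ I ⊆ V}, fun V hV => hV.1, ?_⟩
    apply Set.Subset.antisymm
    · intro A hA
      exact Set.mem_sInter.2 (fun V hV => hV.2 hA)
    · intro A hA
      by_contra hA₀
      obtain ⟨V, hV, hIV, hAV⟩ := model_exists hI hA₀
      exact hAV (Set.mem_sInter.1 hA V ⟨hV, hIV⟩)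
  · intro S A
    constructor
    · intro h I hI hSI
      by_contra hA
      obtain ⟨V, hV, hIV, hAV⟩ := model_exists hI hA
      exact hAV (h V hV (hSI.trans hIV))
    · intro h V hV hSV
      exact h V (logval_isFilter hV) hSV
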